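/- Monotonicity for l-repairs: if ≺' ⊆ ≺ are acyclic priorities on the conflict graph of a finite set r, then every l-repair with respect to ≺ is an l-repair with respect to ≺'. -/
import Mathlib


/-- A relation is acyclic if no element is related to itself by the transitive closure. -/
def Acyclic {α : Type*} (prec : α → α → Prop) : Prop :=
  ∀ x, ¬ Relation.TransGen prec x x

/-- The global preference order on sets of tuples: `X ≪ Y`. -/
def ll {α : Type*} (prec : α → α → Prop) (X Y : Set α) : Prop :=
  ∀ x ∈ X \ Y, ∃ y ∈ Y \ X, prec x y

/-- Closed neighborhood of `x` in the conflict graph. -/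
def nbhd {α : Type*} (conflict : α → α → Prop) (x : α) : Set α :=
  {x} ∪ {y | conflict x y}

/-- The winnow operator: elements of `s` not dominated by any element of `s`. -/
def winnow {α : Type*} (prec : α → α → Prop) (s : Set α) : Set α :=
  {t ∈ s | ¬ ∃ t' ∈ s, prec t t'}

/-- A repair: a maximal subset of `r` containing no conflicting pair. -/
def IsRepair {α : Type*} (r : Set α) (conflict : α → α → Prop) (X : Set α) : Prop :=
  X ⊆ r ∧ (∀ a ∈ X, ∀ b ∈ X, ¬ conflict a b) ∧
    ∀ y ∈ r, y ∉ X → ∃ a ∈ X, conflict y a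

/-- A locally preferred repair: obtainable by iteratively choosing an undominated
tuple and removing it together with its conflict neighborhood. -/
def IsLRepair {α : Type*} (r : Set α) (conflict prec : α → α → Prop) (X : Set α) : Prop :=
  ∃ (n : ℕ) (x : Fin n → α), Function.Injective x ∧ X = Set.range x ∧
    (∀ i : Fin n, x i ∈ winnow prec (r \ {y | ∃ j, j < i ∧ y ∈ nbhd conflict (x j)})) ∧
    winnow prec (r \ {y | ∃ i, y ∈ nbhd conflict (x i)}) = ∅

/-- A globally preferred repair: a `≪`-maximal repair. -/
def IsGRepair {α : Type*} (r : Set α) (conflict prec : α → α → Prop) (X : Set α) : Prop :=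
  IsRepair r conflict X ∧ ∀ Y, IsRepair r conflict Y → ll prec X Y → Y = X

lemma winnow_mono {α : Type*} {prec prec' : α → α → Prop}
    (hext : ∀ x y, prec' x y → prec x y) (s : Set α) :
    winnow prec s ⊆ winnow prec' s := by
  rintro t ⟨hts, hn⟩
  exact ⟨hts, fun ⟨t', ht', h⟩ => hn ⟨t', ht', hext _ _ h⟩⟩

lemma eq_empty_of_winnow_empty {α : Type*} {prec : α → α → Prop}
    (hacyc : Acyclic prec) {s : Set α} (hs : s.Finite)
    (h : winnow prec s = ∅) : s = ∅ := by
  by_contra hne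
  obtain ⟨t, ht⟩ := Set.nonempty_iff_ne_empty.2 hne
  haveI : Finite s := hs
  set R : s → s → Prop := fun a b => Relation.TransGen prec b.1 a.1 with hR
  haveI : IsTrans s R := ⟨fun a b c hab hbc => Relation.TransGen.trans hbc hab⟩
  haveI : IsIrrefl s R := ⟨fun a ha => hacyc a.1 ha⟩
  have wf : WellFounded R := Finite.wellFounded_of_trans_of_irrefl R
  obtain ⟨m, -, hm⟩ := wf.has_min Set.univ ⟨⟨t, ht⟩, trivial⟩
  have : (m : α) ∈ winnow prec s := by
    refine ⟨m.2, ?_⟩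
    rintro ⟨t', ht', hp⟩
    exact hm ⟨t', ht'⟩ trivial (Relation.TransGen.single hp)
  rw [h] at this
  exact this

/-- monotonicity for l-repairs. If ≺' ⊆ ≺ are acyclic priorities,
every l-repair w.r.t. ≺ is an l-repair w.r.t. ≺'. -/
theorem lrepair_monotone {α : Type*} (r : Set α) (hr : r.Finite)
    (conflict prec prec' : α → α → Prop)
    (hsymm : ∀ x y, conflict x y → conflict y x)
    (hsub : ∀ x y, prec x y → conflict x y)
    (hsub' : ∀ x y, prec' x y → conflict x y)
    (hasymm : ∀ x y, prec x y → ¬ prec y x)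
    (hasymm' : ∀ x y, prec' x y → ¬ prec' y x)
    (hacyc : Acyclic prec) (hacyc' : Acyclic prec')
    (hext : ∀ x y, prec' x y → prec x y)
    (X : Set α) (hX : IsLRepair r conflict prec X) :
    IsLRepair r conflict prec' X := by
  obtain ⟨n, x, hinj, hX, hstep, hfin⟩ := hX
  refine ⟨n, x, hinj, hX, fun i => winnow_mono hext _ (hstep i), ?_⟩
  have hsub : (r \ {y | ∃ i, y ∈ nbhd conflict (x i)}) = ∅ :=
    eq_empty_of_winnow_empty hacyc (hr.subset Set.diff_subset) hfin
  rw [hsub]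
  simp [winnow]
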